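/- Let L > 0 and λ ∈ (0,1), and set T = (1/L)·(1−λ)/(1+λ). Suppose φ : ℝ → ℝ satisfies φ'(t) = −2Lφ(t) − L(φ(t)² + 1) for every t ∈ [0,T] and φ(0) = 1/λ. Then φ(T) = λ. -/

import Mathlib

/-- In the case `γ = L`, with `T = (1/L)·(1-λ)/(1+λ)`, a solution of
`φ' = -2Lφ - L(φ² + 1)` on `[0, T]` with `φ 0 = 1/λ` satisfies `φ T = λ`. -/
theorem riccati_miet_formula_eq_case
    (L lam : ℝ) (hL : 0 < L) (hlam : lam ∈ Set.Ioo (0 : ℝ) 1)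
    (T : ℝ) (hTdef : T = (1 / L) * ((1 - lam) / (1 + lam)))
    (φ : ℝ → ℝ)
    (hode : ∀ t ∈ Set.Icc (0 : ℝ) T,
      HasDerivAt φ (-2 * L * φ t - L * ((φ t) ^ 2 + 1)) t)
    (hinit : φ 0 = 1 / lam) :
    φ T = lam := by
  obtain ⟨hl0, hl1⟩ := hlam
  have h1l : (0:ℝ) < 1 + lam := by linarith
  have hT : 0 ≤ T := by
    rw [hTdef]
    have h1 : (0:ℝ) ≤ 1 - lam := by linarith
    exact mul_nonneg (by positivity) (div_nonneg h1 h1l.le)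
  set ψ0 : ℝ := lam / (1 + lam) with hψ0
  set F : ℝ → ℝ := fun t => (φ t + 1) * (ψ0 + L * t) - 1 with hF
  -- derivative of F
  have hF' : ∀ t ∈ Set.Icc (0:ℝ) T, HasDerivAt F (-(L * (φ t + 1)) * F t) t := by
    intro t ht
    have hφ := hode t ht
    have hg : HasDerivAt (fun t : ℝ => ψ0 + L * t) L t := by
      simpa using ((hasDerivAt_id t).const_mul L).const_add ψ0
    have := ((hφ.add_const 1).mul hg).sub_const 1
    refine this.congr_deriv ?_
    simp only [hF]
    ring
  -- continuity of φ and F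
  have hφc : ContinuousOn φ (Set.Icc 0 T) := fun t ht =>
    ((hode t ht).continuousAt).continuousWithinAt
  have hFc : ContinuousOn F (Set.Icc 0 T) := by
    apply ContinuousOn.sub _ continuousOn_const
    exact (hφc.add continuousOn_const).mul (by fun_prop)
  -- bound on |φ + 1|
  obtain ⟨t0, ht0, hmax⟩ := (isCompact_Icc (a := (0:ℝ)) (b := T)).exists_isMaxOn
    ⟨0, Set.left_mem_Icc.2 hT⟩ ((hφc.add continuousOn_const).abs)
  set K : ℝ := L * |φ t0 + 1| with hK
  have hK0 : 0 ≤ K := by positivity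
  have hbound : ∀ t ∈ Set.Ico (0:ℝ) T, ‖-(L * (φ t + 1)) * F t‖ ≤ K * ‖F t‖ + 0 := by
    intro t ht
    have ht' : t ∈ Set.Icc (0:ℝ) T := Set.mem_Icc_of_Ico ht
    have h2 : |φ t + 1| ≤ |φ t0 + 1| := hmax ht'
    rw [add_zero, norm_mul, norm_neg, norm_mul]
    simp only [Real.norm_eq_abs, abs_of_pos hL, hK]
    exact mul_le_mul_of_nonneg_right (mul_le_mul_of_nonneg_left h2 hL.le) (abs_nonneg _)
  have hF0 : ‖F 0‖ ≤ 0 := by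
    have : F 0 = 0 := by
      simp only [hF, hinit, hψ0]
      field_simp
      ring
    simp [this]
  have hgron := norm_le_gronwallBound_of_norm_deriv_right_le hFc
    (fun t ht => ((hF' t (Set.mem_Icc_of_Ico ht)).hasDerivWithinAt)) hF0 hbound
    T (Set.right_mem_Icc.2 hT)
  have hFT : F T = 0 := by
    have : gronwallBound 0 K 0 (T - 0) = 0 := by
      rw [gronwallBound_ε0]; ring
    rw [this] at hgron
    exact norm_le_zero_iff.mp hgron
  -- conclude
  have hψT : ψ0 + L * T = 1 / (1 + lam) := by
    rw [hTdef, hψ0]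
    field_simp
    ring
  have : (φ T + 1) * (1 / (1 + lam)) = 1 := by
    have := hFT
    simp only [hF] at this
    rw [hψT] at this
    linarith
  have : φ T + 1 = 1 + lam := by
    field_simp at this
    linarith
  linarith
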